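/- Let d ≥ 2 and let g be a monic copositive polynomial of degree d. Define t = inf { g(x)/x : x > 0 }. Then there exists y ≥ 0 such that g(y) − t·y = 0 and g'(y) − t = 0. -/

import Mathlib

open Polynomial Filter Topology

theorem extension_surjective (d : ℕ) (hd : 2 ≤ d) (g : ℝ[X])
    (hmonic : g.Monic) (hdeg : g.natDegree = d)
    (hcop : ∀ x : ℝ, 0 ≤ x → 0 ≤ g.eval x)
    (t : ℝ) (hT : t = sInf {y : ℝ | ∃ x : ℝ, 0 < x ∧ y = g.eval x / x}) :
    ∃ y : ℝ, 0 ≤ y ∧ g.eval y - t * y = 0 ∧ (Polynomial.derivative g).eval y - t = 0 := by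
  set S := {y : ℝ | ∃ x : ℝ, 0 < x ∧ y = g.eval x / x} with hSdef
  have hne : S.Nonempty := ⟨g.eval 1 / 1, 1, one_pos, rfl⟩
  have hlb : ∀ y ∈ S, (0:ℝ) ≤ y := by
    rintro y ⟨x, hx, rfl⟩
    exact div_nonneg (hcop x hx.le) hx.le
  have hbdd : BddBelow S := ⟨0, hlb⟩
  have ht0 : 0 ≤ t := hT ▸ le_csInf hne hlb
  have ht : ∀ x : ℝ, 0 < x → t ≤ g.eval x / x := fun x hx => hT ▸ csInf_le hbdd ⟨x, hx, rfl⟩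
  have htmul : ∀ x : ℝ, 0 < x → t * x ≤ g.eval x := fun x hx => by
    have h := ht x hx
    rwa [le_div_iff₀ hx] at h
  rcases (hcop 0 le_rfl).lt_or_eq with hg0 | hg0
  · -- Case B : g(0) > 0 ; minimizer of g(x)/x is interior
    -- blow-up at infinity
    have hgdeg : g.degree = (d : WithBot ℕ) := by
      rw [degree_eq_natDegree hmonic.ne_zero, hdeg]
    have h1 : (-(C (t+1) * X)).degree < g.degree := by
      rw [degree_neg, hgdeg]
      refine lt_of_le_of_lt (degree_C_mul_X_le _) ?_
      exact_mod_cast Nat.lt_of_lt_of_le one_lt_two hd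
    have hQmon : (g - C (t+1) * X).Monic := by
      have := hmonic.add_of_left h1
      rwa [← sub_eq_add_neg] at this
    have hQdeg : 0 < (g - C (t+1) * X).degree := by
      rw [sub_eq_add_neg, degree_add_eq_left_of_degree_lt h1, hgdeg]
      exact_mod_cast (show 0 < d by omega)
    have hQtend : Tendsto (fun x => eval x (g - C (t+1) * X)) atTop atTop :=
      tendsto_atTop_of_leadingCoeff_nonneg _ hQdeg (by rw [hQmon.leadingCoeff]; norm_num)
    obtain ⟨M, hM⟩ := eventually_atTop.mp (hQtend.eventually_ge_atTop 0)
    have hlarge : ∀ x : ℝ, 0 < x → M ≤ x → t + 1 ≤ g.eval x / x := by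
      intro x hx hMx
      have h := hM x hMx
      simp only [eval_sub, eval_mul, eval_C, eval_X] at h
      rw [le_div_iff₀ hx]
      linarith
    -- blow-up at 0
    set c := g.eval 0 with hc
    have hhalf : ∀ᶠ x in 𝓝 (0:ℝ), c/2 < g.eval x := by
      have := (g.continuous.tendsto 0).eventually (eventually_gt_nhds (half_lt_self hg0))
      exact this
    obtain ⟨δ, hδ0, hδ⟩ := Metric.eventually_nhds_iff.mp hhalf
    set ε := min (δ/2) (c/(2*(t+1))) with hεdef
    have hε0 : 0 < ε := lt_min (by linarith) (by positivity)
    have hsmall : ∀ x : ℝ, 0 < x → x ≤ ε → t + 1 ≤ g.eval x / x := by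
      intro x hx hxε
      have hxδ : dist x 0 < δ := by
        rw [Real.dist_eq, sub_zero, abs_of_pos hx]
        have : x ≤ δ/2 := hxε.trans (min_le_left _ _)
        linarith
      have h1 : c/2 < g.eval x := hδ hxδ
      have h2 : x ≤ c/(2*(t+1)) := hxε.trans (min_le_right _ _)
      rw [le_div_iff₀ hx]
      have h3 : (t+1) * x ≤ (t+1) * (c/(2*(t+1))) := by
        apply mul_le_mul_of_nonneg_left h2 (by linarith)
      have h4 : (t+1) * (c/(2*(t+1))) = c/2 := by
        field_simp
      linarith
    -- minimize on compact interval
    set M' := max M (ε+1) with hM'def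
    have hεM' : ε ≤ M' := le_trans (by linarith) (le_max_right _ _)
    have hqcont : ContinuousOn (fun x : ℝ => g.eval x / x) (Set.Icc ε M') := by
      apply ContinuousOn.div g.continuous.continuousOn continuousOn_id
      intro x hx
      exact ne_of_gt (lt_of_lt_of_le hε0 hx.1)
    obtain ⟨y, hyI, hymin⟩ := isCompact_Icc.exists_isMinOn ⟨ε, Set.mem_Icc.mpr ⟨le_refl _, hεM'⟩⟩ hqcont
    have hy0 : 0 < y := lt_of_lt_of_le hε0 hyI.1
    obtain ⟨a, haS, halt⟩ := exists_lt_of_csInf_lt hne (show sInf S < t + 1 by rw [← hT]; linarith)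
    obtain ⟨x₀, hx₀, rfl⟩ := haS
    have hx₀1 : ε ≤ x₀ := by
      by_contra h
      push_neg at h
      exact absurd (hsmall x₀ hx₀ h.le) (not_le.2 halt)
    have hx₀2 : x₀ ≤ M' := by
      by_contra h
      push_neg at h
      exact absurd (hlarge x₀ hx₀ ((le_max_left _ _).trans h.le)) (not_le.2 halt)
    have hylt : g.eval y / y < t + 1 := lt_of_le_of_lt (hymin ⟨hx₀1, hx₀2⟩) halt
    have hqlb : ∀ x : ℝ, 0 < x → g.eval y / y ≤ g.eval x / x := by
      intro x hx
      rcases lt_or_ge x ε with h | h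
      · exact hylt.le.trans (hsmall x hx h.le)
      rcases le_or_gt x M' with h2 | h2
      · exact hymin ⟨h, h2⟩
      · exact hylt.le.trans (hlarge x hx ((le_max_left _ _).trans h2.le))
    have hqy_le : g.eval y / y ≤ t := by
      rw [hT]
      exact le_csInf hne (by rintro a ⟨x, hx, rfl⟩; exact hqlb x hx)
    have hqy : g.eval y / y = t := le_antisymm hqy_le (ht y hy0)
    have hgy : g.eval y = t * y := (div_eq_iff (ne_of_gt hy0)).mp hqy
    have hmin : IsLocalMin (fun x => eval x (g - C t * X)) y := by
      filter_upwards [isOpen_Ioi.mem_nhds (show y ∈ Set.Ioi (0:ℝ) from hy0)] with x hx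
      simp only [eval_sub, eval_mul, eval_C, eval_X, hgy]
      have := htmul x hx
      linarith
    have hd0 := hmin.deriv_eq_zero
    rw [Polynomial.deriv] at hd0
    simp only [derivative_sub, derivative_C_mul, derivative_X, mul_one, eval_sub, eval_C] at hd0
    exact ⟨y, hy0.le, by rw [hgy]; ring, hd0⟩
  · -- Case A : g(0) = 0
    obtain ⟨p, rfl⟩ := (X_dvd_iff (f := g)).mpr (by rw [coeff_zero_eq_eval_zero]; exact hg0.symm)
    have hp : p.Monic := monic_X.of_mul_monic_left hmonic
    have hpne : p ≠ 0 := hp.ne_zero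
    have hdm : 1 + p.natDegree = d := by
      rw [← hdeg, natDegree_mul X_ne_zero hpne, natDegree_X]
    have hpdegpos : 0 < p.degree := natDegree_pos_iff_degree_pos.mp (by omega)
    have heq : ∀ x : ℝ, x ≠ 0 → eval x (X * p) / x = eval x p := by
      intro x hx
      rw [eval_mul, eval_X, mul_div_cancel_left₀ _ hx]
    have htp : ∀ x : ℝ, 0 < x → t ≤ eval x p := fun x hx => (heq x hx.ne') ▸ ht x hx
    have htp0 : t ≤ eval 0 p := by
      have hc : Tendsto (fun x : ℝ => eval x p) (𝓝[>] 0) (𝓝 (eval 0 p)) :=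
        (p.continuous.tendsto 0).mono_left nhdsWithin_le_nhds
      exact ge_of_tendsto hc (eventually_nhdsWithin_of_forall fun x hx => htp x hx)
    have htpall : ∀ x : ℝ, 0 ≤ x → t ≤ eval x p := by
      intro x hx
      rcases hx.lt_or_eq with h | h
      · exact htp x h
      · rw [← h]; exact htp0
    have hptend : Tendsto (fun x => eval x p) atTop atTop :=
      tendsto_atTop_of_leadingCoeff_nonneg p hpdegpos (by rw [hp.leadingCoeff]; norm_num)
    obtain ⟨M, hM⟩ := eventually_atTop.mp (hptend.eventually_ge_atTop (t+1))
    set M' := max M 0 with hM'def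
    obtain ⟨y, hyI, hymin⟩ := isCompact_Icc.exists_isMinOn
      (⟨0, Set.mem_Icc.mpr ⟨le_refl _, le_max_right _ _⟩⟩ : (Set.Icc (0:ℝ) M').Nonempty)
      p.continuous.continuousOn
    obtain ⟨a, haS, halt⟩ := exists_lt_of_csInf_lt hne (show sInf S < t + 1 by rw [← hT]; linarith)
    obtain ⟨x₀, hx₀, rfl⟩ := haS
    rw [heq x₀ hx₀.ne'] at halt
    have hx₀2 : x₀ ≤ M' := by
      by_contra h
      push_neg at h
      exact absurd (hM x₀ ((le_max_left _ _).trans h.le)) (not_le.2 halt)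
    have hylt : eval y p < t + 1 := lt_of_le_of_lt (hymin ⟨hx₀.le, hx₀2⟩) halt
    have hplb : ∀ x : ℝ, 0 < x → eval y p ≤ eval x p := by
      intro x hx
      rcases le_or_gt x M' with h2 | h2
      · exact hymin ⟨hx.le, h2⟩
      · exact hylt.le.trans (hM x ((le_max_left _ _).trans h2.le))
    have hpy_le : eval y p ≤ t := by
      rw [hT]
      refine le_csInf hne ?_
      rintro a ⟨x, hx, rfl⟩
      rw [heq x hx.ne']
      exact hplb x hx
    have hpy : eval y p = t := le_antisymm hpy_le (htpall y hyI.1)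
    have hyp' : y * eval y (derivative p) = 0 := by
      rcases eq_or_lt_of_le hyI.1 with h0 | hypos
      · rw [← h0, zero_mul]
      · have hmin2 : IsLocalMin (fun x => eval x p) y := by
          filter_upwards [isOpen_Ioi.mem_nhds (show y ∈ Set.Ioi (0:ℝ) from hypos)] with x hx
          show eval y p ≤ eval x p
          rw [hpy]
          exact htp x hx
        have hdd := hmin2.deriv_eq_zero
        rw [Polynomial.deriv] at hdd
        rw [hdd, mul_zero]
    refine ⟨y, hyI.1, ?_, ?_⟩
    · rw [eval_mul, eval_X, hpy]; ring
    · rw [derivative_mul, derivative_X, eval_add, eval_mul, eval_mul, eval_one, eval_X, one_mul, hpy, hyp']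
      ring
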